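/- Let f : S^1 → S^1 be a continuous odd map (f(−x) = −f(x)). Then the degree of f is odd; in particular f is not null-homotopic. -/

import Mathlib

open Real

namespace OddCircleAux

noncomputable def e (x : ℝ) : Metric.sphere (0 : ℂ) 1 :=
  ⟨Complex.exp (2 * π * x * Complex.I), by
    simp [mem_sphere_zero_iff_norm, Complex.norm_exp]⟩

lemma coe_e (x : ℝ) : (e x : ℂ) = Complex.exp (2 * π * x * Complex.I) := rfl

lemma cont_e : Continuous e := by
  apply Continuous.subtype_mk
  exact Complex.continuous_exp.comp (by continuity)

lemma e_add_one (x : ℝ) : e (x + 1) = e x := by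
  apply Subtype.ext
  show Complex.exp (2 * (π:ℂ) * ((x + 1 : ℝ) : ℂ) * Complex.I) = _
  rw [show (2 * (π:ℂ) * ((x + 1 : ℝ) : ℂ) * Complex.I)
      = 2*π*x*Complex.I + 2*π*Complex.I by push_cast; ring,
    Complex.exp_add, Complex.exp_two_pi_mul_I, mul_one]
  rfl

lemma e_half (x : ℝ) : e (x + 1/2) = - e x := by
  apply Subtype.ext
  show Complex.exp (2 * (π:ℂ) * ((x + 1/2 : ℝ) : ℂ) * Complex.I) = -(e x : ℂ)
  rw [show (2 * (π:ℂ) * ((x + 1/2 : ℝ) : ℂ) * Complex.I)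
      = 2*π*x*Complex.I + π*Complex.I by push_cast; ring,
    Complex.exp_add, Complex.exp_pi_mul_I, coe_e]
  ring

lemma exp_eq_exp_real {a b : ℝ} :
    Complex.exp (2 * π * a * Complex.I) = Complex.exp (2 * π * b * Complex.I) ↔
      ∃ n : ℤ, a = b + n := by
  rw [Complex.exp_eq_exp_iff_exists_int]
  constructor
  · rintro ⟨n, hn⟩
    refine ⟨n, ?_⟩
    have him := congrArg Complex.im hn
    simp [Complex.add_im, Complex.mul_im, Complex.mul_re] at him
    have hπ : (0:ℝ) < π := pi_pos
    nlinarith [him]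
  · rintro ⟨n, hn⟩
    exact ⟨n, by rw [hn]; push_cast; ring⟩

lemma no_half (j m : ℤ) : (j : ℝ) ≠ (m : ℝ) + 1/2 := by
  intro h
  have h2 : ((2*j : ℤ) : ℝ) = ((2*m+1 : ℤ) : ℝ) := by push_cast; linarith
  have := Int.cast_injective h2
  omega

lemma int_valued_const {g : ℝ → ℝ} (hc : Continuous g)
    (hint : ∀ x, ∃ n : ℤ, g x = n) (a b : ℝ) : g a = g b := by
  wlog hab : a ≤ b generalizing a b
  · exact (this b a (le_of_not_ge hab)).symm
  obtain ⟨m, hm⟩ := hint a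
  obtain ⟨k, hk⟩ := hint b
  rcases lt_trichotomy (g a) (g b) with h | h | h
  · exfalso
    have hsub : Set.Icc (g a) (g b) ⊆ g '' Set.Icc a b :=
      intermediate_value_Icc hab hc.continuousOn
    have hmem : (m : ℝ) + 1/2 ∈ Set.Icc (g a) (g b) := by
      constructor
      · rw [hm]; linarith
      · have h1 : (m:ℝ) < k := by rw [← hm, ← hk]; exact h
        have h2 : m < k := by exact_mod_cast h1
        have h3 : (m:ℝ) + 1 ≤ k := by exact_mod_cast h2
        rw [hk]; linarith
    obtain ⟨x, _, hx⟩ := hsub hmem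
    obtain ⟨j, hj⟩ := hint x
    exact no_half j m (by rw [← hj, hx])
  · exact h
  · exfalso
    have hsub : Set.Icc (g b) (g a) ⊆ g '' Set.Icc a b :=
      intermediate_value_Icc' hab hc.continuousOn
    have hmem : (k : ℝ) + 1/2 ∈ Set.Icc (g b) (g a) := by
      constructor
      · rw [hk]; linarith
      · have h1 : (k:ℝ) < m := by rw [← hm, ← hk]; exact h
        have h2 : k < m := by exact_mod_cast h1
        have h3 : (k:ℝ) + 1 ≤ m := by exact_mod_cast h2
        rw [hm]; linarith
    obtain ⟨x, _, hx⟩ := hsub hmem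
    obtain ⟨j, hj⟩ := hint x
    exact no_half j k (by rw [← hj, hx])

lemma part1 (f : C(Metric.sphere (0 : ℂ) 1, Metric.sphere (0 : ℂ) 1))
    (hodd : ∀ z, f (-z) = -f z) (d : ℤ) (F : ℝ → ℝ) (hFc : Continuous F)
    (hlift : ∀ (x : ℝ) (z : Metric.sphere (0 : ℂ) 1),
      (z : ℂ) = Complex.exp (2 * π * x * Complex.I) →
        ((f z : ℂ)) = Complex.exp (2 * π * F x * Complex.I))
    (hper : ∀ x : ℝ, F (x + 1) = F x + d) : Odd d := by
  have key : ∀ x : ℝ, ∃ n : ℤ, F (x + 1/2) - F x - 1/2 = n := by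
    intro x
    have h1 : ((f (e x) : ℂ)) = Complex.exp (2 * π * F x * Complex.I) :=
      hlift x (e x) (coe_e x)
    have h2 : ((f (e (x + 1/2)) : ℂ)) = Complex.exp (2 * π * F (x + 1/2) * Complex.I) :=
      hlift (x + 1/2) (e (x + 1/2)) (coe_e (x + 1/2))
    rw [e_half, hodd, coe_neg_sphere, h1] at h2
    have h3 : Complex.exp (2 * π * ((F x + 1/2 : ℝ) : ℂ) * Complex.I)
        = Complex.exp (2 * π * ((F (x + 1/2) : ℝ) : ℂ) * Complex.I) := by
      rw [← h2, show (2*(π:ℂ)*((F x + 1/2 : ℝ):ℂ)*Complex.I)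
          = 2*π*((F x : ℝ):ℂ)*Complex.I + π*Complex.I by push_cast; ring,
        Complex.exp_add, Complex.exp_pi_mul_I]
      ring
    obtain ⟨n, hn⟩ := exp_eq_exp_real.mp h3.symm
    exact ⟨n, by linarith⟩
  set g : ℝ → ℝ := fun x => F (x + 1/2) - F x - 1/2 with hg
  have hgc : Continuous g := ((hFc.comp (by continuity)).sub hFc).sub continuous_const
  obtain ⟨k₀, hk₀⟩ := key 0
  have hhalf : g (1/2) = g 0 := int_valued_const hgc key (1/2) 0
  have hF1 : F 1 = F 0 + d := by simpa using hper 0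
  have hk₀' : F (1/2) - F 0 - 1/2 = (k₀ : ℝ) := by simpa using hk₀
  have hd : (d : ℝ) = 2 * k₀ + 1 := by
    have e1 : g 0 = F (1/2) - F 0 - 1/2 := by simp [hg]
    have e2 : g (1/2) = F 1 - F (1/2) - 1/2 := by simp only [hg]; norm_num
    rw [hhalf] at e2
    linarith
  have : d = 2 * k₀ + 1 := by exact_mod_cast hd
  rw [Int.odd_iff]
  omega

lemma sphere_coe_abs (z : Metric.sphere (0 : ℂ) 1) : ‖(z : ℂ)‖ = 1 := by
  have := z.2
  rwa [mem_sphere_zero_iff_norm] at this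

lemma sphere_coe_ne_zero (z : Metric.sphere (0 : ℂ) 1) : (z : ℂ) ≠ 0 := by
  intro h
  have := sphere_coe_abs z
  rw [h] at this
  simp at this

lemma exp_arg_div {w : ℂ} (h : ‖w‖ = 1) :
    w = Complex.exp (2 * π * ((Complex.arg w / (2*π) : ℝ) : ℂ) * Complex.I) := by
  conv_lhs => rw [← Complex.norm_mul_exp_arg_mul_I w]
  rw [h, Complex.ofReal_one, one_mul]
  congr 1
  have hπ : (π:ℂ) ≠ 0 := Complex.ofReal_ne_zero.mpr pi_ne_zero
  push_cast
  field_simp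

/-- Transfer a (degree-0) lift from `g` to a map `g'` that is never antipodal to `g`. -/
lemma transfer (g g' : Metric.sphere (0 : ℂ) 1 → Metric.sphere (0 : ℂ) 1)
    (hgc : Continuous g) (hg'c : Continuous g')
    (hne : ∀ z, (g' z : ℂ) ≠ -(g z : ℂ))
    (F : ℝ → ℝ) (hF : Continuous F)
    (hl : ∀ x, ((g (e x)) : ℂ) = Complex.exp (2 * π * F x * Complex.I))
    (hp : ∀ x, F (x + 1) = F x) :
    ∃ F' : ℝ → ℝ, Continuous F' ∧
      (∀ x, ((g' (e x)) : ℂ) = Complex.exp (2 * π * F' x * Complex.I)) ∧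
      ∀ x, F' (x + 1) = F' x := by
  set q : Metric.sphere (0 : ℂ) 1 → ℂ := fun z => (g' z : ℂ) / (g z : ℂ) with hq
  have habs : ∀ z, ‖q z‖ = 1 := by
    intro z
    simp [hq, map_div₀, sphere_coe_abs]
  have hslit : ∀ z, q z ∈ Complex.slitPlane := by
    intro z
    rw [Complex.mem_slitPlane_iff]
    by_cases him : (q z).im = 0
    · left
      have hre : |(q z).re| = 1 := by
        have h0 := habs z
        rw [Complex.norm_def, Complex.normSq_apply, him] at h0
        rw [← Real.sqrt_sq_eq_abs]
        simpa [sq] using h0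
      rcases abs_eq (by norm_num : (0:ℝ) ≤ 1) |>.mp hre with h | h
      · linarith
      · exfalso
        have hq1 : q z = -1 := Complex.ext (by simp [h]) (by simp [him])
        have : (g' z : ℂ) = -(g z : ℂ) := by
          rw [hq, div_eq_iff (sphere_coe_ne_zero (g z))] at hq1
          simpa using hq1
        exact hne z this
    · right; exact him
  have hqc : Continuous fun x => q (e x) :=
    ((continuous_subtype_val.comp (hg'c.comp cont_e)).div
      (continuous_subtype_val.comp (hgc.comp cont_e))
      (fun x => sphere_coe_ne_zero _))
  refine ⟨fun x => F x + Complex.arg (q (e x)) / (2 * π), ?_, ?_, ?_⟩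
  · apply hF.add
    apply Continuous.div_const
    rw [continuous_iff_continuousAt]
    intro x
    exact ContinuousAt.comp (g := Complex.arg) (f := fun x => q (e x)) (x := x)
      (Complex.continuousAt_arg (hslit (e x))) hqc.continuousAt
  · intro x
    have h1 : (g' (e x) : ℂ) = q (e x) * (g (e x) : ℂ) := by
      rw [hq]
      field_simp
      exact (mul_div_cancel_right₀ _ (sphere_coe_ne_zero _)).symm
    rw [h1, hl x]
    conv_lhs => rw [exp_arg_div (habs (e x))]
    rw [← Complex.exp_add]
    congr 1
    push_cast
    ring
  · intro x
    simp only [e_add_one, hp]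

end OddCircleAux

open OddCircleAux in
/-- **Odd mapping theorem for the circle.** A continuous odd (antipodal) map
`f : S¹ → S¹` has odd degree (where the degree `d` is characterised by any continuous
lift `F` of `f` along `x ↦ exp(2πix)`, satisfying `F(x+1) = F(x) + d`); in particular
`f` is not null-homotopic. -/
theorem odd_circle_map_odd_degree
    (f : C(Metric.sphere (0 : ℂ) 1, Metric.sphere (0 : ℂ) 1))
    (hodd : ∀ z, f (-z) = -f z) :
    (∀ (d : ℤ) (F : ℝ → ℝ), Continuous F →
        (∀ (x : ℝ) (z : Metric.sphere (0 : ℂ) 1),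
          (z : ℂ) = Complex.exp (2 * π * x * Complex.I) →
            ((f z : ℂ)) = Complex.exp (2 * π * F x * Complex.I)) →
        (∀ x : ℝ, F (x + 1) = F x + d) → Odd d) ∧
      ¬f.Nullhomotopic := by
  refine ⟨fun d F hFc hlift hper => part1 f hodd d F hFc hlift hper, ?_⟩
  rintro ⟨y, ⟨H⟩⟩
  have hu : UniformContinuous (H : C(unitInterval × Metric.sphere (0:ℂ) 1, Metric.sphere (0:ℂ) 1)) :=
    CompactSpace.uniformContinuous_of_continuous (ContinuousMap.continuous _)
  obtain ⟨δ, hδ, hδ'⟩ := Metric.uniformContinuous_iff.mp hu 1 one_pos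
  obtain ⟨n, hn⟩ := exists_nat_gt (1 / δ)
  have hn0 : (0:ℝ) < n := lt_trans (by positivity) hn
  have h1n : 1 / (n:ℝ) < δ := by
    have := one_div_lt_one_div_of_lt (by positivity : (0:ℝ) < 1/δ) hn
    rwa [one_div_one_div] at this
  set σ : ℕ → unitInterval := fun k => Set.projIcc 0 1 zero_le_one ((k:ℝ)/n) with hσ
  have hdistσ : ∀ k : ℕ, dist (σ k) (σ (k+1)) ≤ 1 / n := by
    intro k
    have hlip : LipschitzWith 1 (Set.projIcc (0:ℝ) 1 zero_le_one) := LipschitzWith.projIcc _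
    have h2 := hlip.dist_le_mul ((k:ℝ)/n) (((k:ℝ)+1)/n)
    simp only [NNReal.coe_one, one_mul] at h2
    have h3 : dist ((k:ℝ)/n) (((k:ℝ)+1)/n) = 1/n := by
      rw [Real.dist_eq, show ((k:ℝ)/n - ((k:ℝ)+1)/n) = -(1/n) by ring,
        abs_neg, abs_of_nonneg (by positivity)]
    simp only [hσ]
    have hcast : ((k+1:ℕ):ℝ) = (k:ℝ)+1 := by push_cast; ring
    rw [hcast]
    exact h2.trans (le_of_eq h3)
  have hstep : ∀ (k : ℕ) (z : Metric.sphere (0:ℂ) 1),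
      (H (σ k, z) : ℂ) ≠ -(H (σ (k+1), z) : ℂ) := by
    intro k z heq
    have hd : dist ((σ k, z) : unitInterval × Metric.sphere (0:ℂ) 1) ((σ (k+1), z)) < δ := by
      rw [Prod.dist_eq]
      simp only [dist_self]
      exact lt_of_le_of_lt (max_le (hdistσ k) (by positivity)) h1n
    have h2 := hδ' hd
    have hHc : ∀ p : unitInterval × Metric.sphere (0:ℂ) 1, (H : C(_ × _, _)) p = H p :=
      fun p => rfl
    simp only [hHc] at h2
    rw [Subtype.dist_eq, Complex.dist_eq, heq] at h2
    have h3 : ‖(-(H (σ (k+1), z) : ℂ) - (H (σ (k+1), z) : ℂ))‖ = 2 := by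
      rw [show (-(H (σ (k+1), z) : ℂ) - (H (σ (k+1), z) : ℂ))
          = -(2 * (H (σ (k+1), z) : ℂ)) by ring]
      rw [norm_neg, norm_mul]
      simp [sphere_coe_abs]
    rw [h3] at h2
    linarith
  have key : ∀ j : ℕ, ∃ F : ℝ → ℝ, Continuous F ∧
      (∀ x, ((H (σ (n - j), e x)) : ℂ) = Complex.exp (2 * π * F x * Complex.I)) ∧
      ∀ x, F (x + 1) = F x := by
    intro j
    induction j with
    | zero =>
      refine ⟨fun _ => Complex.arg (y : ℂ) / (2*π), continuous_const, ?_, fun x => rfl⟩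
      intro x
      have hσn : σ (n - 0) = 1 := by
        apply Subtype.ext
        simp only [hσ, Nat.sub_zero]
        rw [div_self (ne_of_gt hn0), Set.projIcc_right]
        rfl
      rw [hσn]
      have hy : H (1, e x) = y := by
        have := H.apply_one (e x)
        simp only [ContinuousMap.const_apply] at this
        exact this
      rw [hy]
      exact exp_arg_div (sphere_coe_abs y)
    | succ j ih =>
      obtain ⟨F, hFc, hFl, hFp⟩ := ih
      by_cases hj : j < n
      · have hk : n - j = (n - (j+1)) + 1 := by omega
        have hne : ∀ z, ((H (σ (n - (j+1)), z)) : ℂ) ≠ -((H (σ (n - j), z)) : ℂ) := by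
          intro z
          rw [hk]
          exact hstep (n - (j+1)) z
        exact transfer (fun z => H (σ (n - j), z)) (fun z => H (σ (n - (j+1)), z))
          (H.continuous.comp (Continuous.prodMk_right _))
          (H.continuous.comp (Continuous.prodMk_right _)) hne F hFc hFl hFp
      · have hnj : n - (j+1) = n - j := by omega
        rw [hnj]
        exact ⟨F, hFc, hFl, hFp⟩
  obtain ⟨F, hFc, hFl, hFp⟩ := key n
  have hσ0 : σ (n - n) = 0 := by
    apply Subtype.ext
    simp only [hσ, Nat.sub_self]
    rw [Nat.cast_zero, zero_div, Set.projIcc_left]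
    rfl
  have hlift : ∀ (x : ℝ) (z : Metric.sphere (0 : ℂ) 1),
      (z : ℂ) = Complex.exp (2 * π * x * Complex.I) →
        ((f z : ℂ)) = Complex.exp (2 * π * F x * Complex.I) := by
    intro x z hz
    have hze : z = e x := Subtype.ext (by rw [hz, coe_e])
    rw [hze]
    have h1 := hFl x
    rw [hσ0] at h1
    rw [← h1]
    congr 1
    exact (H.apply_zero (e x)).symm
  have hodd0 := part1 f hodd 0 F hFc hlift (by intro x; rw [hFp]; simp)
  exact (Int.not_odd_iff_even.mpr Even.zero) hodd0
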